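/- Let M be a small elementary submodel of 𝕄, q a global type finitely satisfiable in M, and let a¹,…,aⁿ be the first n terms of a coheir Morley sequence in q over M. Let a be a tuple with a ≡_M a¹ and let b be any tuple. Then there exist tuples b¹,…,bⁿ such that b¹a¹,…,bⁿaⁿ are the first n terms of a coheir Morley sequence over M and bⁱaⁱ ≡_M ba for each i; the same holds for infinite coheir Morley sequences in place of their initial segments. -/

import Mathlib

/- Common model-theoretic infrastructure for formalizing
   "NSOP₂ theories are NSOP₁" (arXiv:2206.08512).

   We work with a monster model `𝕄` of a complete theory: a sufficiently
   saturated and strongly homogeneous `L`-structure.  Tuples are functions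
   `α → 𝕄`; sets of formulas with parameters are coded via `FmlP`. -/

open FirstOrder Language

universe u v w

namespace NSOP2Paper

/-- A first-order formula in free variables `α ⊕ Fin n` together with an
`n`-tuple of parameters from `𝕄`. -/
abbrev FmlP (L : FirstOrder.Language.{u, u}) (𝕄 : Type u) (α : Type v) :=
  Σ n : ℕ, L.Formula (α ⊕ Fin n) × (Fin n → 𝕄)

/-- `a ≡_C b` : the tuples `a` and `b` satisfy the same formulas with
parameters from `C`. -/
def EqTpOver (L : FirstOrder.Language.{u, u}) {𝕄 : Type u} [L.Structure 𝕄] (C : Set 𝕄)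
    {α : Type v} (a b : α → 𝕄) : Prop :=
  ∀ (n : ℕ) (φ : L.Formula (α ⊕ Fin n)) (c : Fin n → 𝕄), (∀ i, c i ∈ C) →
    (φ.Realize (Sum.elim a c) ↔ φ.Realize (Sum.elim b c))

/-- `tp(a / C)` is finitely satisfiable in `Ms`: every formula over `C`
satisfied by `a` has a realization by a tuple from `Ms`. -/
def FinSatIn (L : FirstOrder.Language.{u, u}) {𝕄 : Type u} [L.Structure 𝕄] (Ms : Set 𝕄)
    {α : Type v} (a : α → 𝕄) (C : Set 𝕄) : Prop :=
  ∀ (n : ℕ) (φ : L.Formula (α ⊕ Fin n)) (c : Fin n → 𝕄), (∀ i, c i ∈ C) →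
    φ.Realize (Sum.elim a c) →
    ∃ m : α → 𝕄, (∀ i, m i ∈ Ms) ∧ φ.Realize (Sum.elim m c)

/-- `Ms` is the underlying set of a (small) elementary submodel of `𝕄`. -/
def IsElemSubmodel (L : FirstOrder.Language.{u, u}) {𝕄 : Type u} [L.Structure 𝕄] (Ms : Set 𝕄) : Prop :=
  ∃ S : L.ElementarySubstructure 𝕄, (S : Set 𝕄) = Ms

/-- A complete consistent global type (a complete type over the monster `𝕄`)
in variables `α`, coded as the set of formulas-with-parameters it contains. -/
structure GlobalType (L : FirstOrder.Language.{u, u}) (𝕄 : Type u) [L.Structure 𝕄] (α : Type v) where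
  carrier : Set (FmlP L 𝕄 α)
  consistent : ∀ t : Finset (FmlP L 𝕄 α), ↑t ⊆ carrier →
    ∃ a : α → 𝕄, ∀ p ∈ t, p.2.1.Realize (Sum.elim a p.2.2)
  complete : ∀ (n : ℕ) (φ : L.Formula (α ⊕ Fin n)) (c : Fin n → 𝕄),
    (⟨n, (φ, c)⟩ : FmlP L 𝕄 α) ∈ carrier ∨ (⟨n, (φ.not, c)⟩ : FmlP L 𝕄 α) ∈ carrier

variable {L : FirstOrder.Language.{u, u}} {𝕄 : Type u} [L.Structure 𝕄]

/-- The global type `q` is finitely satisfiable in `Ms` (i.e. it is a coheir of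
its restriction to `Ms`). -/
def GlobalType.FinSatInM {α : Type v} (q : GlobalType L 𝕄 α) (Ms : Set 𝕄) : Prop :=
  ∀ t : Finset (FmlP L 𝕄 α), ↑t ⊆ q.carrier →
    ∃ m : α → 𝕄, (∀ i, m i ∈ Ms) ∧ ∀ p ∈ t, p.2.1.Realize (Sum.elim m p.2.2)

/-- `a ⊨ q|_C` : the tuple `a` realizes the restriction of the global type `q`
to parameters from `C`. -/
def RealizesType {α : Type v} (q : GlobalType L 𝕄 α) (a : α → 𝕄) (C : Set 𝕄) : Prop :=
  ∀ (n : ℕ) (φ : L.Formula (α ⊕ Fin n)) (c : Fin n → 𝕄), (∀ i, c i ∈ C) →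
    (⟨n, (φ, c)⟩ : FmlP L 𝕄 α) ∈ q.carrier → φ.Realize (Sum.elim a c)

/-- The global type `q` extends `tp(a / C)`. -/
def ExtendsTpOver {α : Type v} (q : GlobalType L 𝕄 α) (C : Set 𝕄) (a : α → 𝕄) : Prop :=
  ∀ (n : ℕ) (φ : L.Formula (α ⊕ Fin n)) (c : Fin n → 𝕄), (∀ i, c i ∈ C) →
    φ.Realize (Sum.elim a c) → (⟨n, (φ, c)⟩ : FmlP L 𝕄 α) ∈ q.carrier

/-- `B` is a coheir Morley sequence over `Ms` in the global type `q`: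
`q` is finitely satisfiable in `Ms` and `B i ⊨ q|_(Ms ∪ B_{<i})`. -/
def MorleyIn {α : Type v} (q : GlobalType L 𝕄 α) (Ms : Set 𝕄) (B : ℕ → α → 𝕄) : Prop :=
  q.FinSatInM Ms ∧
    ∀ i : ℕ, RealizesType q (B i) (Ms ∪ ⋃ (j : ℕ) (_ : j < i), Set.range (B j))

/-- `B` is a coheir Morley sequence over `Ms`. -/
def CoheirMorley (L : FirstOrder.Language.{u, u}) {𝕄 : Type u} [L.Structure 𝕄] (Ms : Set 𝕄)
    {α : Type v} (B : ℕ → α → 𝕄) : Prop :=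
  ∃ q : GlobalType L 𝕄 α, MorleyIn q Ms B

/-- Flatten an `ℕ`-indexed sequence of `α`-tuples into a single tuple. -/
def flatSeq {α : Type v} (I : ℕ → α → 𝕄) : ℕ × α → 𝕄 := fun p => I p.1 p.2

/-- The sequence `I` is indiscernible over `C`. -/
def IndiscernibleOver (L : FirstOrder.Language.{u, u}) {𝕄 : Type u} [L.Structure 𝕄] (C : Set 𝕄)
    {α : Type v} (I : ℕ → α → 𝕄) : Prop :=
  ∀ (n : ℕ) (f g : Fin n → ℕ), StrictMono f → StrictMono g →
    EqTpOver L C (fun p : Fin n × α => I (f p.1) p.2) (fun p : Fin n × α => I (g p.1) p.2)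

/-- `𝕄` is `κ`-saturated: every finitely satisfiable set of formulas in fewer
than `κ` variables over a parameter set of size `< κ` is realized in `𝕄`. -/
def IsSaturated (L : FirstOrder.Language.{u, u}) (𝕄 : Type u) [L.Structure 𝕄] (κ : Cardinal.{u}) : Prop :=
  ∀ (α : Type u) (A : Set 𝕄), Cardinal.mk α < κ → Cardinal.mk A < κ →
    ∀ Γ : Set (FmlP L 𝕄 α), (∀ p ∈ Γ, ∀ i, p.2.2 i ∈ A) →
      (∀ t : Finset (FmlP L 𝕄 α), ↑t ⊆ Γ →
        ∃ a : α → 𝕄, ∀ p ∈ t, p.2.1.Realize (Sum.elim a p.2.2)) →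
      ∃ a : α → 𝕄, ∀ p ∈ Γ, p.2.1.Realize (Sum.elim a p.2.2)

/-- `𝕄` is strongly `κ`-homogeneous: partial elementary maps between tuples of
length `< κ` extend to automorphisms of `𝕄`. -/
def IsStronglyHomogeneous (L : FirstOrder.Language.{u, u}) (𝕄 : Type u) [L.Structure 𝕄]
    (κ : Cardinal.{u}) : Prop :=
  ∀ (α : Type u), Cardinal.mk α < κ → ∀ a b : α → 𝕄, EqTpOver L (∅ : Set 𝕄) a b →
    ∃ σ : 𝕄 ≃[L] 𝕄, ∀ i, σ (a i) = b i

/-- `𝕄` is a monster model (for smallness degree `κ`): sufficiently saturated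
and strongly homogeneous. -/
def IsMonster (L : FirstOrder.Language.{u, u}) (𝕄 : Type u) [L.Structure 𝕄] (κ : Cardinal.{u}) : Prop :=
  Cardinal.aleph0 < κ ∧ IsSaturated L 𝕄 κ ∧ IsStronglyHomogeneous L 𝕄 κ

/-! ### Tree combinatorics -/

/-- The meet (longest common prefix) of two finite sequences. -/
def meet {A : Type w} [DecidableEq A] : List A → List A → List A
  | a :: as, b :: bs => if a = b then a :: meet as bs else []
  | _, _ => []

/-- The meet of `η 0, …, η i`. -/
def combMeet {A : Type w} [DecidableEq A] {k : ℕ} (η : Fin k → List A) (i : Fin k) : List A :=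
  (List.ofFn fun j : Fin i.val => η (Fin.castLE i.2.le j)).foldl meet (η i)

/-- `η 0, …, η (k-1)` is a descending comb: a lexicographically increasing
antichain such that the meet of `η 0, …, η (i+1)` is a proper initial segment
of the meet of `η 0, …, η i`. -/
def DescendingComb {A : Type w} [DecidableEq A] [LT A] {k : ℕ} (η : Fin k → List A) : Prop :=
  (∀ i j : Fin k, i ≠ j → ¬ η i <+: η j) ∧
  (∀ i j : Fin k, i < j → List.Lex (· < ·) (η i) (η j)) ∧
  (∀ (i : ℕ) (h : i + 1 < k),
    combMeet η ⟨i + 1, h⟩ <+: combMeet η ⟨i, by omega⟩ ∧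
    combMeet η ⟨i + 1, h⟩ ≠ combMeet η ⟨i, by omega⟩)

/-! ### Tree properties of theories (witnessed in the monster model) -/

/-- `T = Th(𝕄)` has `SOP₁`. -/
def HasSOP1 (L : FirstOrder.Language.{u, u}) (𝕄 : Type u) [L.Structure 𝕄] : Prop :=
  ∃ (k m : ℕ) (φ : L.Formula (Fin k ⊕ Fin m)) (b : List Bool → Fin m → 𝕄),
    (∀ σ : ℕ → Bool, ∃ a : Fin k → 𝕄,
      ∀ n : ℕ, φ.Realize (Sum.elim a (b (List.ofFn fun i : Fin n => σ i)))) ∧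
    ∀ η₁ η₂ : List Bool, (η₁ ++ [false]) <+: η₂ →
      ¬ ∃ a : Fin k → 𝕄, φ.Realize (Sum.elim a (b η₂)) ∧
        φ.Realize (Sum.elim a (b (η₁ ++ [true])))

/-- `T = Th(𝕄)` has `SOP₂`. -/
def HasSOP2 (L : FirstOrder.Language.{u, u}) (𝕄 : Type u) [L.Structure 𝕄] : Prop :=
  ∃ (k m : ℕ) (φ : L.Formula (Fin k ⊕ Fin m)) (b : List Bool → Fin m → 𝕄),
    (∀ σ : ℕ → Bool, ∃ a : Fin k → 𝕄,
      ∀ n : ℕ, φ.Realize (Sum.elim a (b (List.ofFn fun i : Fin n => σ i)))) ∧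
    ∀ η₁ η₂ : List Bool, ¬ η₁ <+: η₂ → ¬ η₂ <+: η₁ →
      ¬ ∃ a : Fin k → 𝕄, φ.Realize (Sum.elim a (b η₁)) ∧ φ.Realize (Sum.elim a (b η₂))

/-- `T = Th(𝕄)` has `k`-`DCTP₁`: paths are consistent but descending combs of
size `k` are inconsistent. -/
def HasKDCTP1 (L : FirstOrder.Language.{u, u}) (𝕄 : Type u) [L.Structure 𝕄] (k : ℕ) : Prop :=
  ∃ (r m : ℕ) (φ : L.Formula (Fin r ⊕ Fin m)) (b : List ℕ → Fin m → 𝕄),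
    (∀ σ : ℕ → ℕ, ∃ a : Fin r → 𝕄,
      ∀ n : ℕ, φ.Realize (Sum.elim a (b (List.ofFn fun i : Fin n => σ i)))) ∧
    ∀ η : Fin k → List ℕ, DescendingComb η →
      ¬ ∃ a : Fin r → 𝕄, ∀ i, φ.Realize (Sum.elim a (b (η i)))

/-- `T = Th(𝕄)` has weak `k`-`TP₁`: paths are consistent but any `k` pairwise
incomparable nodes with common pairwise meet are inconsistent. -/
def HasWeakKTP1 (L : FirstOrder.Language.{u, u}) (𝕄 : Type u) [L.Structure 𝕄] (k : ℕ) : Prop :=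
  ∃ (r m : ℕ) (φ : L.Formula (Fin r ⊕ Fin m)) (b : List ℕ → Fin m → 𝕄),
    (∀ σ : ℕ → ℕ, ∃ a : Fin r → 𝕄,
      ∀ n : ℕ, φ.Realize (Sum.elim a (b (List.ofFn fun i : Fin n => σ i)))) ∧
    ∀ η : Fin k → List ℕ,
      (∀ i j, i ≠ j → ¬ η i <+: η j) →
      (∀ i j i' j' : Fin k, i ≠ j → i' ≠ j' → meet (η i) (η j) = meet (η i') (η j')) →
      ¬ ∃ a : Fin r → 𝕄, ∀ i, φ.Realize (Sum.elim a (b (η i)))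

/-- `T = Th(𝕄)` has `k`-`DCTP₂`: paths are `k`-inconsistent but descending
combs are consistent. -/
def HasKDCTP2 (L : FirstOrder.Language.{u, u}) (𝕄 : Type u) [L.Structure 𝕄] (k : ℕ) : Prop :=
  ∃ (r m : ℕ) (φ : L.Formula (Fin r ⊕ Fin m)) (b : List Bool → Fin m → 𝕄),
    (∀ σ : ℕ → Bool, ∀ s : Finset ℕ, s.card = k →
      ¬ ∃ a : Fin r → 𝕄, ∀ n ∈ s,
        φ.Realize (Sum.elim a (b (List.ofFn fun i : Fin n => σ i)))) ∧
    ∀ (l : ℕ) (η : Fin l → List Bool), DescendingComb η →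
      ∃ a : Fin r → 𝕄, ∀ i, φ.Realize (Sum.elim a (b (η i)))

/-! ### Kim-dividing and Conant-dividing, with respect to coheir Morley sequences -/

/-- `φ(x, b)` Kim-divides over `Ms`: some coheir Morley sequence over `Ms`
starting with `b` makes it inconsistent. -/
def KimDivides (L : FirstOrder.Language.{u, u}) {𝕄 : Type u} [L.Structure 𝕄] (Ms : Set 𝕄)
    {α : Type v} {n : ℕ} (φ : L.Formula (α ⊕ Fin n)) (b : Fin n → 𝕄) : Prop :=
  ∃ B : ℕ → Fin n → 𝕄, CoheirMorley L Ms B ∧ B 0 = b ∧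
    ¬ ∃ a : α → 𝕄, ∀ i, φ.Realize (Sum.elim a (B i))

/-- `φ(x, b)` Kim-forks over `Ms`: it implies a finite disjunction of formulas
Kim-dividing over `Ms`. -/
def KimForks (L : FirstOrder.Language.{u, u}) {𝕄 : Type u} [L.Structure 𝕄] (Ms : Set 𝕄)
    {α : Type v} {n : ℕ} (φ : L.Formula (α ⊕ Fin n)) (b : Fin n → 𝕄) : Prop :=
  ∃ (N : ℕ) (m : Fin N → ℕ) (ψ : ∀ j : Fin N, L.Formula (α ⊕ Fin (m j)))
    (c : ∀ j : Fin N, Fin (m j) → 𝕄),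
    (∀ j, KimDivides L Ms (ψ j) (c j)) ∧
    ∀ a : α → 𝕄, φ.Realize (Sum.elim a b) → ∃ j, (ψ j).Realize (Sum.elim a (c j))

/-- `φ(x, b)` Conant-divides over `Ms`: every coheir Morley sequence over `Ms`
starting with `b` makes it inconsistent. -/
def ConantDivides (L : FirstOrder.Language.{u, u}) {𝕄 : Type u} [L.Structure 𝕄] (Ms : Set 𝕄)
    {α : Type v} {n : ℕ} (φ : L.Formula (α ⊕ Fin n)) (b : Fin n → 𝕄) : Prop :=
  ∀ B : ℕ → Fin n → 𝕄, CoheirMorley L Ms B → B 0 = b →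
    ¬ ∃ a : α → 𝕄, ∀ i, φ.Realize (Sum.elim a (B i))

/-- `φ(x, b)` Conant-forks over `Ms`. -/
def ConantForks (L : FirstOrder.Language.{u, u}) {𝕄 : Type u} [L.Structure 𝕄] (Ms : Set 𝕄)
    {α : Type v} {n : ℕ} (φ : L.Formula (α ⊕ Fin n)) (b : Fin n → 𝕄) : Prop :=
  ∃ (N : ℕ) (m : Fin N → ℕ) (ψ : ∀ j : Fin N, L.Formula (α ⊕ Fin (m j)))
    (c : ∀ j : Fin N, Fin (m j) → 𝕄),
    (∀ j, ConantDivides L Ms (ψ j) (c j)) ∧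
    ∀ a : α → 𝕄, φ.Realize (Sum.elim a b) → ∃ j, (ψ j).Realize (Sum.elim a (c j))

/-- `a ⫝^{K*}_{Ms} b` : `tp(a/Ms b)` contains no formula Conant-forking
over `Ms`. -/
def ConantIndep (L : FirstOrder.Language.{u, u}) {𝕄 : Type u} [L.Structure 𝕄] (Ms : Set 𝕄)
    {α : Type v} {β : Type w} (a : α → 𝕄) (b : β → 𝕄) : Prop :=
  ∀ (n : ℕ) (φ : L.Formula (α ⊕ Fin n)) (d : Fin n → 𝕄),
    (∀ i, d i ∈ Ms ∪ Set.range b) → φ.Realize (Sum.elim a d) →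
    ¬ ConantForks L Ms φ d

/-! ### Abstract independence relations between sets over models -/

/-- An abstract ternary relation `A ⫝_M B` between subsets of `𝕄` over
(elementary submodels of) `𝕄`. -/
structure IndRel (L : FirstOrder.Language.{u, u}) (𝕄 : Type u) [L.Structure 𝕄] where
  rel : Set 𝕄 → Set 𝕄 → Set 𝕄 → Prop

/-- A set `S` of `α`-tuples is type-definable over `C`. -/
def TypeDefinableOver (L : FirstOrder.Language.{u, u}) {𝕄 : Type u} [L.Structure 𝕄] (C : Set 𝕄)
    {γ : Type v} (S : Set (γ → 𝕄)) : Prop :=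
  ∃ Γ : Set (FmlP L 𝕄 γ), (∀ p ∈ Γ, ∀ i, p.2.2 i ∈ C) ∧
    ∀ g : γ → 𝕄, g ∈ S ↔ ∀ p ∈ Γ, p.2.1.Realize (Sum.elim g p.2.2)

namespace IndRel


/-- Invariance under automorphisms of `𝕄`. -/
def Invariant (R : IndRel L 𝕄) : Prop :=
  ∀ (σ : 𝕄 ≃[L] 𝕄) (A Ms B : Set 𝕄), R.rel A Ms B →
    R.rel ((⇑σ) '' A) ((⇑σ) '' Ms) ((⇑σ) '' B)

/-- Monotonicity (on both sides). -/
def Mono (R : IndRel L 𝕄) : Prop :=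
  ∀ (A A' Ms B B' : Set 𝕄), IsElemSubmodel L Ms → R.rel A Ms B →
    Ms ⊆ A' → A' ⊆ A → Ms ⊆ B' → B' ⊆ B → R.rel A' Ms B'

/-- Existence: for `M ⊆ A, B` there is `A' ≡_M A` with `A' ⫝_M B`. -/
def Existence (R : IndRel L 𝕄) (κ : Cardinal.{u}) : Prop :=
  ∀ (Ms : Set 𝕄), IsElemSubmodel L Ms → Cardinal.mk Ms < κ →
    ∀ (α β : Type u), Cardinal.mk α < κ → Cardinal.mk β < κ →
      ∀ (a : α → 𝕄) (b : β → 𝕄),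
        ∃ a' : α → 𝕄, EqTpOver L Ms a' a ∧
          R.rel (Ms ∪ Set.range a') Ms (Ms ∪ Set.range b)

/-- Right extension. -/
def RightExt (R : IndRel L 𝕄) (κ : Cardinal.{u}) : Prop :=
  ∀ (Ms : Set 𝕄), IsElemSubmodel L Ms → Cardinal.mk Ms < κ →
    ∀ (α : Type u), Cardinal.mk α < κ → ∀ (a : α → 𝕄) (B C : Set 𝕄),
      Cardinal.mk B < κ → Cardinal.mk C < κ →
      R.rel (Set.range a) Ms B → B ⊆ C →
      ∃ a' : α → 𝕄, EqTpOver L B a' a ∧ R.rel (Set.range a') Ms C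

/-- Quasi-strong finite character: for complete types `p = tp(a₀/Ms)` and
`q = tp(b₀/Ms)`, the set of pairs of realizations `(a, b)` with `a ⫝_Ms b`
is type-definable over `Ms`. -/
def QSFC (R : IndRel L 𝕄) (κ : Cardinal.{u}) : Prop :=
  ∀ (Ms : Set 𝕄), IsElemSubmodel L Ms → Cardinal.mk Ms < κ →
    ∀ (α β : Type u), Cardinal.mk α < κ → Cardinal.mk β < κ →
      ∀ (a₀ : α → 𝕄) (b₀ : β → 𝕄),
        TypeDefinableOver L Ms {g : (α ⊕ β) → 𝕄 |
          EqTpOver L Ms (g ∘ Sum.inl) a₀ ∧ EqTpOver L Ms (g ∘ Sum.inr) b₀ ∧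
          R.rel (Set.range (g ∘ Sum.inl)) Ms (Set.range (g ∘ Sum.inr))}

/-- The coheir chain condition. -/
def CoheirChain (R : IndRel L 𝕄) (κ : Cardinal.{u}) : Prop :=
  ∀ (Ms : Set 𝕄), IsElemSubmodel L Ms → Cardinal.mk Ms < κ →
    ∀ (α β : Type u), Cardinal.mk α < κ → Cardinal.mk β < κ →
      ∀ (a : α → 𝕄) (b : β → 𝕄), R.rel (Set.range a) Ms (Set.range b) →
        ∀ I : ℕ → β → 𝕄, CoheirMorley L Ms I → I 0 = b →
          ∃ I' : ℕ → β → 𝕄, EqTpOver L Ms (flatSeq I') (flatSeq I) ∧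
            R.rel (Set.range a) Ms (⋃ i, Set.range (I' i)) ∧
            ∀ i, EqTpOver L (Ms ∪ Set.range a) (I' i) b

/-- `R` implies `⫝ʰ` : `A ⫝_M B` implies `tp(B / M A)` is finitely
satisfiable in `M`. -/
def StrongerThanH (R : IndRel L 𝕄) : Prop :=
  ∀ (A Ms B : Set 𝕄), IsElemSubmodel L Ms → R.rel A Ms B →
    FinSatIn L Ms (fun x : B => (x : 𝕄)) (Ms ∪ A)

end IndRel

/-- The axioms satisfied by the relations among which `⫝^CK` is weakest. -/
def GoodRel (R : IndRel L 𝕄) (κ : Cardinal.{u}) : Prop :=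
  R.StrongerThanH ∧ R.Invariant ∧ R.Mono ∧ R.Existence κ ∧ R.RightExt κ ∧ R.CoheirChain κ

/-- `R` is `⫝^CK` : the weakest relation implying `⫝ʰ` and satisfying
invariance, monotonicity, existence, right extension and the coheir chain
condition. -/
def IsCK (R : IndRel L 𝕄) (κ : Cardinal.{u}) : Prop :=
  GoodRel R κ ∧ ∀ R' : IndRel L 𝕄, GoodRel R' κ →
    ∀ A Ms B : Set 𝕄, R'.rel A Ms B → R.rel A Ms B

/-- `q` is a canonical global type over `Ms` (w.r.t. the relation `R = ⫝^CK`):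
whenever `c ⊨ q|_{Ms b}` we have `b ⫝^CK_{Ms} c`. -/
def IsCanonicalGlobal (R : IndRel L 𝕄) (κ : Cardinal.{u}) (Ms : Set 𝕄) {α : Type v}
    (q : GlobalType L 𝕄 α) : Prop :=
  ∀ (β : Type u), Cardinal.mk β < κ → ∀ (b : β → 𝕄) (c : α → 𝕄),
    RealizesType q c (Ms ∪ Set.range b) → R.rel (Set.range b) Ms (Set.range c)

/-- A canonical Morley sequence over `Ms`: a coheir Morley sequence in a
canonical coheir. -/
def CanonicalMorley (R : IndRel L 𝕄) (κ : Cardinal.{u}) (Ms : Set 𝕄) {α : Type v}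
    (I : ℕ → α → 𝕄) : Prop :=
  ∃ q : GlobalType L 𝕄 α, IsCanonicalGlobal R κ Ms q ∧ MorleyIn q Ms I

/-- `q` is a strong canonical global type over `Ms`. -/
def IsStrongCanonical (R : IndRel L 𝕄) (κ : Cardinal.{u}) (Ms : Set 𝕄) {α : Type v}
    (q : GlobalType L 𝕄 α) : Prop :=
  ∀ (β : Type u), Cardinal.mk β < κ → ∀ (b : β → 𝕄) (c : α → 𝕄),
    RealizesType q c (Ms ∪ Set.range b) →
    ∀ (γ : Type u), Cardinal.mk γ < κ → ∀ (a : γ → 𝕄),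
      ∃ a' : γ → 𝕄, EqTpOver L (Ms ∪ Set.range c) a' a ∧
        ∃ q' : GlobalType L 𝕄 (γ ⊕ α), IsCanonicalGlobal R κ Ms q' ∧
          ExtendsTpOver q' (Ms ∪ Set.range b) (Sum.elim a' c)

/-! ### `M`-invariant ideals and `𝓘`-Kim-dividing -/

/-- An `Ms`-invariant ideal on the definable subsets of `𝕄` (in variables `α`). -/
structure InvIdeal (L : FirstOrder.Language.{u, u}) (𝕄 : Type u) [L.Structure 𝕄] (Ms : Set 𝕄)
    (α : Type v) where
  mem : Set (α → 𝕄) → Prop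
  definable_of_mem : ∀ S, mem S → ∃ (n : ℕ) (ψ : L.Formula (α ⊕ Fin n)) (c : Fin n → 𝕄),
    S = {a : α → 𝕄 | ψ.Realize (Sum.elim a c)}
  union_mem : ∀ S T, mem S → mem T → mem (S ∪ T)
  subset_mem : ∀ S T, mem S →
    (∃ (n : ℕ) (ψ : L.Formula (α ⊕ Fin n)) (c : Fin n → 𝕄),
      T = {a : α → 𝕄 | ψ.Realize (Sum.elim a c)}) →
    T ⊆ S → mem T
  invariant : ∀ σ : 𝕄 ≃[L] 𝕄, (∀ x ∈ Ms, σ x = x) → ∀ S, mem S →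
    mem ((fun a => (⇑σ) ∘ a) '' S)

/-- `φ(x, b)` `𝓘`-Kim-divides over `Ms`. -/
def IKimDivides {Ms : Set 𝕄} {α : Type v} (I : InvIdeal L 𝕄 Ms α) {n : ℕ}
    (φ : L.Formula (α ⊕ Fin n)) (b : Fin n → 𝕄) : Prop :=
  ∃ (B : ℕ → Fin n → 𝕄) (k : ℕ), CoheirMorley L Ms B ∧ B 0 = b ∧ 0 < k ∧
    ∀ s : Finset ℕ, s.card = k →
      I.mem {a : α → 𝕄 | ∀ i ∈ s, φ.Realize (Sum.elim a (B i))}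

/-- `φ(x, b)` `𝓘`-Kim-forks over `Ms`. -/
def IKimForks {Ms : Set 𝕄} {α : Type v} (I : InvIdeal L 𝕄 Ms α) {n : ℕ}
    (φ : L.Formula (α ⊕ Fin n)) (b : Fin n → 𝕄) : Prop :=
  ∃ (N : ℕ) (m : Fin N → ℕ) (ψ : ∀ j : Fin N, L.Formula (α ⊕ Fin (m j)))
    (c : ∀ j : Fin N, Fin (m j) → 𝕄),
    (∀ j, IKimDivides I (ψ j) (c j)) ∧
    ∀ a : α → 𝕄, φ.Realize (Sum.elim a b) → ∃ j, (ψ j).Realize (Sum.elim a (c j))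

/-- `φ(x, b)` `𝓘`-quasi-divides over `Ms`. -/
def IQuasiDivides {Ms : Set 𝕄} {α : Type v} (I : InvIdeal L 𝕄 Ms α) {n : ℕ}
    (φ : L.Formula (α ⊕ Fin n)) (b : Fin n → 𝕄) : Prop :=
  ∃ (mm : ℕ) (b' : Fin mm → Fin n → 𝕄), 0 < mm ∧ (∀ j, EqTpOver L Ms (b' j) b) ∧
    I.mem {a : α → 𝕄 | ∀ j, φ.Realize (Sum.elim a (b' j))}

/-! ### `h^⫝`-inconsistency and the derived relation `⫝'` -/

/-- A family of formulas is `h^⫝`-inconsistent with respect to `P = tp(a₀/Ms)`. -/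
def HInconsistent (R : IndRel L 𝕄) (Ms : Set 𝕄) {α : Type v} (a₀ : α → 𝕄)
    {ι : Type w} (m : ι → ℕ) (φ : ∀ i : ι, L.Formula (α ⊕ Fin (m i)))
    (b : ∀ i : ι, Fin (m i) → 𝕄) : Prop :=
  ¬ ∃ a : α → 𝕄, EqTpOver L Ms a a₀ ∧
      R.rel (Set.range a) Ms (⋃ i, Set.range (b i)) ∧
      ∀ i, (φ i).Realize (Sum.elim a (b i))

/-- A single formula is `h^⫝`-inconsistent with respect to `P = tp(a₀/Ms)`. -/
def HInconsistentSingle (R : IndRel L 𝕄) (Ms : Set 𝕄) {α : Type v} (a₀ : α → 𝕄)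
    {n : ℕ} (φ : L.Formula (α ⊕ Fin n)) (b : Fin n → 𝕄) : Prop :=
  ¬ ∃ a : α → 𝕄, EqTpOver L Ms a a₀ ∧ R.rel (Set.range a) Ms (Set.range b) ∧
      φ.Realize (Sum.elim a b)

/-- `φ(x, b)` `h^⫝`-Kim-divides with respect to `tp(a₀/Ms)`. -/
def HKimDivides (R : IndRel L 𝕄) (Ms : Set 𝕄) {α : Type v} (a₀ : α → 𝕄)
    {n : ℕ} (φ : L.Formula (α ⊕ Fin n)) (b : Fin n → 𝕄) : Prop :=
  ∃ B : ℕ → Fin n → 𝕄, CoheirMorley L Ms B ∧ B 0 = b ∧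
    HInconsistent R Ms a₀ (fun _ : ℕ => n) (fun _ => φ) B

/-- `φ(x, b)` `h^⫝`-Kim-forks with respect to `tp(a₀/Ms)`. -/
def HKimForks (R : IndRel L 𝕄) (Ms : Set 𝕄) {α : Type v} (a₀ : α → 𝕄)
    {n : ℕ} (φ : L.Formula (α ⊕ Fin n)) (b : Fin n → 𝕄) : Prop :=
  ∃ (N : ℕ) (m : Fin N → ℕ) (ψ : ∀ j : Fin N, L.Formula (α ⊕ Fin (m j)))
    (c : ∀ j : Fin N, Fin (m j) → 𝕄),
    (∀ j, HKimDivides R Ms a₀ (ψ j) (c j)) ∧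
    ∀ a : α → 𝕄, φ.Realize (Sum.elim a b) → ∃ j, (ψ j).Realize (Sum.elim a (c j))

/-- `φ(x, b)` `h^⫝`-quasi-divides with respect to `tp(a₀/Ms)`. -/
def HQuasiDivides (R : IndRel L 𝕄) (Ms : Set 𝕄) {α : Type v} (a₀ : α → 𝕄)
    {n : ℕ} (φ : L.Formula (α ⊕ Fin n)) (b : Fin n → 𝕄) : Prop :=
  ∃ (mm : ℕ) (b' : Fin mm → Fin n → 𝕄), 0 < mm ∧ (∀ j, EqTpOver L Ms (b' j) b) ∧
    HInconsistent R Ms a₀ (fun _ : Fin mm => n) (fun _ => φ) b'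

/-- The derived relation `⫝'` on tuples:
`tp(a / Ms b)` contains no formula `h^⫝`-Kim-forking w.r.t. `tp(a/Ms)`. -/
def DerivedIndep (R : IndRel L 𝕄) (Ms : Set 𝕄) {α : Type v} {β : Type w}
    (a : α → 𝕄) (b : β → 𝕄) : Prop :=
  ∀ (n : ℕ) (φ : L.Formula (α ⊕ Fin n)) (d : Fin n → 𝕄),
    (∀ i, d i ∈ Ms ∪ Set.range b) → φ.Realize (Sum.elim a d) →
    ¬ HKimForks R Ms a φ d

/-- The derived relation `⫝'` as a relation between sets over models. -/
def derived (R : IndRel L 𝕄) : IndRel L 𝕄 where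
  rel A Ms B := ∀ (n : ℕ) (φ : L.Formula (↥A ⊕ Fin n)) (d : Fin n → 𝕄),
    (∀ i, d i ∈ Ms ∪ B) → φ.Realize (Sum.elim (fun x : A => (x : 𝕄)) d) →
    ¬ HKimForks R Ms (fun x : A => (x : 𝕄)) φ d

/-! ### Coheir trees -/

/-- The tuple, indexed by extensions, consisting of the part of the tree `c`
lying (weakly) above the node `ν` (where `ν` has length `Lh`). -/
def subtreeTupleLen {α : Type v} {n : ℕ} (c : {l : List ℕ // l.length ≤ n} → α → 𝕄)
    (Lh : ℕ) (ν : List ℕ) (hν : ν.length = Lh) :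
    ({s : List ℕ // Lh + s.length ≤ n} × α) → 𝕄 :=
  fun p => c ⟨ν ++ p.1.1, by rw [List.length_append, hν]; exact p.1.2⟩ p.2

end NSOP2Paper


namespace NSOP2Paper

variable {L : FirstOrder.Language.{u, u}} {𝕄 : Type u} [L.Structure 𝕄]

/-- Finite support: compress the left variables to finitely many. -/
lemma exists_finSupport_left {V : Type*} {W : Type*} (φ : L.Formula (V ⊕ W)) :
    ∃ (k : ℕ) (g : Fin k → V), Function.Injective g ∧ ∃ ψ : L.Formula (Fin k ⊕ W),
      ∀ (v : V → 𝕄) (w : W → 𝕄),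
        φ.Realize (Sum.elim v w) ↔ ψ.Realize (Sum.elim (v ∘ g) w) := by
  classical
  set s : Finset (V ⊕ W) := φ.freeVarFinset with hs
  set t : Finset V := s.biUnion (fun x => Sum.elim (fun a => {a}) (fun _ => (∅ : Finset V)) x)
    with ht
  have hmem : ∀ a : V, Sum.inl a ∈ s → a ∈ t := by
    intro a ha
    rw [ht, Finset.mem_biUnion]
    exact ⟨Sum.inl a, ha, by simp⟩
  set k := Fintype.card ↥t with hk
  set e : ↥t ≃ Fin k := Fintype.equivFin ↥t with he
  refine ⟨k, fun i => (e.symm i : V), ?_, ?_⟩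
  · intro i j hij
    apply e.symm.injective
    exact Subtype.coe_injective hij
  · have hsub : ↑φ.freeVarFinset ⊆ (↑s : Set (V ⊕ W)) := by rw [hs]
    set F : (↑s : Set (V ⊕ W)) → Fin k ⊕ W := fun x =>
      Sum.rec (motive := fun y => y ∈ s → Fin k ⊕ W)
        (fun a ha => Sum.inl (e ⟨a, hmem a ha⟩))
        (fun b _ => Sum.inr b) x.1 x.2 with hF
    refine ⟨Formula.relabel F (φ.restrictFreeVar (Set.inclusion hsub)), fun v w => ?_⟩
    rw [Formula.realize_relabel]
    have key : Sum.elim (v ∘ fun i => ((e.symm i : ↥t) : V)) w ∘ F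
        = (Sum.elim v w) ∘ (fun x : (↑s : Set (V ⊕ W)) => (x : V ⊕ W)) := by
      funext x
      obtain ⟨x, hx⟩ := x
      cases x with
      | inl a => simp [hF]
      | inr b => simp [hF]
    rw [key]
    have := BoundedFormula.realize_restrictFreeVar' (φ := φ)
      (s := (↑s : Set (V ⊕ W))) hsub (v := Sum.elim v w) (xs := default)
    exact this.symm

/-- Finite support: compress the right variables to finitely many. -/
lemma exists_finSupport_right {V : Type*} {W : Type*} (φ : L.Formula (V ⊕ W)) :
    ∃ (k : ℕ) (g : Fin k → W), Function.Injective g ∧ ∃ ψ : L.Formula (V ⊕ Fin k),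
      ∀ (v : V → 𝕄) (w : W → 𝕄),
        φ.Realize (Sum.elim v w) ↔ ψ.Realize (Sum.elim v (w ∘ g)) := by
  obtain ⟨k, g, hg, ψ, hψ⟩ := exists_finSupport_left (𝕄 := 𝕄) (Formula.relabel Sum.swap φ)
  refine ⟨k, g, hg, Formula.relabel Sum.swap ψ, fun v w => ?_⟩
  have h1 : (Formula.relabel Sum.swap φ).Realize (Sum.elim w v) ↔ φ.Realize (Sum.elim v w) := by
    rw [Formula.realize_relabel]
    congr! 1
    funext x; cases x <;> rfl
  rw [← h1, hψ, Formula.realize_relabel]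
  congr! 1
  funext x; cases x <;> rfl

lemma eqTpOver_symm {C : Set 𝕄} {V : Type*} {u v : V → 𝕄} (h : EqTpOver L C u v) :
    EqTpOver L C v u := fun n φ c hc => (h n φ c hc).symm

lemma eqTpOver_trans {C : Set 𝕄} {V : Type*} {u v w : V → 𝕄} (h1 : EqTpOver L C u v)
    (h2 : EqTpOver L C v w) : EqTpOver L C u w :=
  fun n φ c hc => (h1 n φ c hc).trans (h2 n φ c hc)

lemma eqTpOver_comp {C : Set 𝕄} {V : Type*} {u v : V → 𝕄} (h : EqTpOver L C u v)
    {V' : Type*} (f : V' → V) : EqTpOver L C (u ∘ f) (v ∘ f) := by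
  intro n φ c hc
  have := h n (φ.relabel (Sum.map f id)) c hc
  rw [Formula.realize_relabel, Formula.realize_relabel] at this
  have e1 : ∀ x : V → 𝕄, Sum.elim x c ∘ Sum.map f id = Sum.elim (x ∘ f) c := by
    intro x; funext z; cases z <;> rfl
  rw [e1, e1] at this
  exact this

lemma eqTpOver_append_params {C : Set 𝕄} {V : Type*} {u v : V → 𝕄} (h : EqTpOver L C u v)
    {p : ℕ} {m : Fin p → 𝕄} (hm : ∀ i, m i ∈ C) :
    EqTpOver L C (Sum.elim u m) (Sum.elim v m) := by
  intro n φ c hc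
  set ρ : (V ⊕ Fin p) ⊕ Fin n → V ⊕ Fin (p + n) :=
    Sum.elim (Sum.elim Sum.inl (fun i => Sum.inr (finSumFinEquiv (Sum.inl i))))
      (fun j => Sum.inr (finSumFinEquiv (Sum.inr j))) with hρ
  set d : Fin (p + n) → 𝕄 := Sum.elim m c ∘ finSumFinEquiv.symm with hd
  have hdC : ∀ i, d i ∈ C := by
    intro i
    rw [hd]
    rcases hz : finSumFinEquiv.symm i with z | z
    · simp only [Function.comp_apply, hz, Sum.elim_inl]; exact hm z
    · simp only [Function.comp_apply, hz, Sum.elim_inr]; exact hc z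
  have := h (p + n) (φ.relabel ρ) d hdC
  rw [Formula.realize_relabel, Formula.realize_relabel] at this
  have e1 : ∀ x : V → 𝕄, Sum.elim x d ∘ ρ = Sum.elim (Sum.elim x m) c := by
    intro x; funext z
    rcases z with (z | z) | z
    · rfl
    · simp [hρ, hd]
    · simp [hρ, hd]
  rw [e1, e1] at this
  exact this


lemma GlobalType.realize_iff_mem {γ : Type v} (q : GlobalType L 𝕄 γ) {x : γ → 𝕄} {D : Set 𝕄}
    (hx : RealizesType q x D) {n : ℕ} (φ : L.Formula (γ ⊕ Fin n)) {c : Fin n → 𝕄}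
    (hc : ∀ i, c i ∈ D) :
    φ.Realize (Sum.elim x c) ↔ (⟨n, (φ, c)⟩ : FmlP L 𝕄 γ) ∈ q.carrier := by
  constructor
  · intro hr
    rcases q.complete n φ c with h | h
    · exact h
    · exfalso
      have := hx n φ.not c hc h
      rw [Formula.realize_not] at this
      exact this hr
  · exact fun h => hx n φ c hc h

lemma GlobalType.not_mem_both {γ : Type v} (q : GlobalType L 𝕄 γ) {n : ℕ}
    {φ : L.Formula (γ ⊕ Fin n)} {c : Fin n → 𝕄}
    (h1 : (⟨n, (φ, c)⟩ : FmlP L 𝕄 γ) ∈ q.carrier)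
    (h2 : (⟨n, (φ.not, c)⟩ : FmlP L 𝕄 γ) ∈ q.carrier) : False := by
  classical
  obtain ⟨a, ha⟩ := q.consistent {⟨n, (φ, c)⟩, ⟨n, (φ.not, c)⟩} (by
    intro p hp
    simp only [Finset.coe_insert, Finset.coe_singleton, Set.mem_insert_iff,
      Set.mem_singleton_iff] at hp
    rcases hp with rfl | rfl
    · exact h1
    · exact h2)
  have hA := ha _ (Finset.mem_insert_self _ _)
  have hB := ha _ (Finset.mem_insert_of_mem (Finset.mem_singleton_self _))
  have hB' : ¬ φ.Realize (Sum.elim a c) := by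
    have : (Formula.not φ).Realize (Sum.elim a c) := hB
    rwa [Formula.realize_not] at this
  exact hB' hA

lemma GlobalType.mem_invariant {Ms : Set 𝕄} {γ : Type v} (q : GlobalType L 𝕄 γ)
    (hqf : q.FinSatInM Ms) {n : ℕ} {ψ : L.Formula (γ ⊕ Fin n)} {d d' : Fin n → 𝕄}
    (h : EqTpOver L Ms d d')
    (hd : (⟨n, (ψ, d)⟩ : FmlP L 𝕄 γ) ∈ q.carrier) :
    (⟨n, (ψ, d')⟩ : FmlP L 𝕄 γ) ∈ q.carrier := by
  classical
  by_contra hd'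
  have hnot : (⟨n, (ψ.not, d')⟩ : FmlP L 𝕄 γ) ∈ q.carrier :=
    (q.complete n ψ d').resolve_left hd'
  obtain ⟨m, hmMs, hmr⟩ := hqf {⟨n, (ψ, d)⟩, ⟨n, (ψ.not, d')⟩} (by
    intro p hp
    simp only [Finset.coe_insert, Finset.coe_singleton, Set.mem_insert_iff,
      Set.mem_singleton_iff] at hp
    rcases hp with rfl | rfl
    · exact hd
    · exact hnot)
  have h1 : ψ.Realize (Sum.elim m d) := hmr _ (Finset.mem_insert_self _ _)
  have h2 : ¬ ψ.Realize (Sum.elim m d') := by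
    have : (Formula.not ψ).Realize (Sum.elim m d') :=
      hmr _ (Finset.mem_insert_of_mem (Finset.mem_singleton_self _))
    rwa [Formula.realize_not] at this
  obtain ⟨k, g, hg, Ψ, hΨ⟩ := exists_finSupport_left (𝕄 := 𝕄) ψ
  have hiff := h k (Formula.relabel Sum.swap Ψ) (m ∘ g) (fun i => hmMs (g i))
  rw [Formula.realize_relabel, Formula.realize_relabel] at hiff
  have e1 : ∀ x : Fin n → 𝕄, Sum.elim x (m ∘ g) ∘ Sum.swap = Sum.elim (m ∘ g) x := by
    intro x; funext z; cases z <;> rfl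
  rw [e1, e1] at hiff
  exact h2 ((hΨ m d').mpr (hiff.mp ((hΨ m d).mp h1)))

lemma MorleyIn.realizesType_Ms {Ms : Set 𝕄} {γ : Type v} {q : GlobalType L 𝕄 γ}
    {X : ℕ → γ → 𝕄} (hX : MorleyIn q Ms X) (i : ℕ) : RealizesType q (X i) Ms :=
  fun n φ c hc hm => hX.2 i n φ c (fun j => Set.mem_union_left _ (hc j)) hm

lemma MorleyIn.eqTpOver_of_mem {Ms : Set 𝕄} {γ : Type v} {q : GlobalType L 𝕄 γ}
    {X : ℕ → γ → 𝕄} (hX : MorleyIn q Ms X) (i j : ℕ) : EqTpOver L Ms (X i) (X j) := by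
  intro n φ c hc
  rw [q.realize_iff_mem (hX.realizesType_Ms i) φ hc,
    q.realize_iff_mem (hX.realizesType_Ms j) φ hc]

lemma exists_conj {V : Type*} (C : Set 𝕄) (l : List (FmlP L 𝕄 V))
    (hl : ∀ p ∈ l, ∀ i, p.2.2 i ∈ C) :
    ∃ (K : ℕ) (θ : L.Formula (V ⊕ Fin K)) (d : Fin K → 𝕄), (∀ i, d i ∈ C) ∧
      ∀ v : V → 𝕄, (θ.Realize (Sum.elim v d) ↔ ∀ p ∈ l, p.2.1.Realize (Sum.elim v p.2.2)) := by
  induction l with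
  | nil =>
    refine ⟨0, ⊤, finZeroElim, fun i => i.elim0, fun v => ?_⟩
    simp
  | cons p l ih =>
    obtain ⟨K', θ', d', hd', hiff'⟩ := ih (fun p hp i => hl p (List.mem_cons_of_mem _ hp) i)
    refine ⟨p.1 + K',
      (Formula.relabel (Sum.map id (Fin.castAdd K')) p.2.1) ⊓
        (Formula.relabel (Sum.map id (Fin.natAdd p.1)) θ'),
      Fin.append p.2.2 d', ?_, ?_⟩
    · intro i
      refine Fin.addCases (fun j => ?_) (fun j => ?_) i
      · rw [Fin.append_left]
        exact hl p List.mem_cons_self j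
      · rw [Fin.append_right]
        exact hd' j
    · intro v
      rw [Formula.realize_inf, Formula.realize_relabel, Formula.realize_relabel]
      have e1 : Sum.elim v (Fin.append p.2.2 d') ∘ Sum.map id (Fin.castAdd K')
          = Sum.elim v p.2.2 := by
        funext z
        cases z with
        | inl x => rfl
        | inr j => simp [Fin.append_left]
      have e2 : Sum.elim v (Fin.append p.2.2 d') ∘ Sum.map id (Fin.natAdd p.1)
          = Sum.elim v d' := by
        funext z
        cases z with
        | inl x => rfl
        | inr j => simp [Fin.append_right]
      rw [e1, e2, hiff']
      constructor
      · rintro ⟨h1, h2⟩ r hr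
        rcases List.mem_cons.mp hr with rfl | hr
        · exact h1
        · exact h2 r hr
      · intro hh
        exact ⟨hh p List.mem_cons_self, fun r hr => hh r (List.mem_cons_of_mem _ hr)⟩

lemma exists_nat_seq {T : Type*} [Nonempty T] (G : (ℕ → T) → ℕ → T → Prop)
    (hmono : ∀ f g : ℕ → T, ∀ (i : ℕ) (t : T), (∀ j, j < i → f j = g j) → G f i t → G g i t)
    (hex : ∀ (f : ℕ → T) (i : ℕ), ∃ t, G f i t) :
    ∃ C : ℕ → T, ∀ i, G C i (C i) := by
  classical
  let D : ℕ → ℕ → T := fun i => Nat.rec (fun _ => Classical.arbitrary T)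
    (fun i Di => Function.update Di i (Classical.choose (hex Di i))) i
  have hD : ∀ i, D (i + 1) = Function.update (D i) i (Classical.choose (hex (D i) i)) :=
    fun i => rfl
  have hstab : ∀ i j, j < i → D i j = D (j + 1) j := by
    intro i
    induction i with
    | zero => intro j hj; omega
    | succ i ih =>
      intro j hj
      rcases Nat.lt_succ_iff_lt_or_eq.mp hj with h | h
      · rw [hD, Function.update_of_ne (by omega)]
        exact ih j h
      · subst h; rfl
  refine ⟨fun i => D (i + 1) i, fun i => ?_⟩
  have h2 : D (i + 1) i = Classical.choose (hex (D i) i) := by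
    rw [hD, Function.update_self]
  show G (fun i => D (i + 1) i) i (D (i + 1) i)
  rw [h2]
  exact hmono (D i) (fun j => D (j + 1) j) i _ (fun j hj => hstab i j hj)
    (Classical.choose_spec (hex (D i) i))

lemma exists_morleyIn {Ms : Set 𝕄} {κ : Cardinal.{u}} (hκ : Cardinal.aleph0 < κ)
    (hsat : IsSaturated L 𝕄 κ) (hMssmall : Cardinal.mk Ms < κ) {γ : Type u}
    (hγ : Cardinal.mk γ < κ) (Q : GlobalType L 𝕄 γ) (hQ : Q.FinSatInM Ms) :
    ∃ C : ℕ → γ → 𝕄, MorleyIn Q Ms C := by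
  have hne : Nonempty (γ → 𝕄) := by
    obtain ⟨a, _⟩ := Q.consistent ∅ (by simp)
    exact ⟨a⟩
  have key : ∀ D : Set 𝕄, Cardinal.mk D < κ → ∃ c : γ → 𝕄, RealizesType Q c D := by
    intro D hD
    obtain ⟨c, hc⟩ := hsat γ D hγ hD {p | p ∈ Q.carrier ∧ ∀ i, p.2.2 i ∈ D}
      (fun p hp i => hp.2 i)
      (fun t ht => Q.consistent t (fun p hp => (ht hp).1))
    exact ⟨c, fun n φ cc hcc hm => hc ⟨n, (φ, cc)⟩ ⟨hm, hcc⟩⟩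
  have hcard : ∀ (f : ℕ → γ → 𝕄) (i : ℕ),
      Cardinal.mk ↥(Ms ∪ ⋃ (j : ℕ) (_ : j < i), Set.range (f j)) < κ := by
    intro f i
    induction i with
    | zero =>
      have he : (⋃ (j : ℕ) (_ : j < 0), Set.range (f j)) = (∅ : Set 𝕄) := by simp
      rw [he, Set.union_empty]
      exact hMssmall
    | succ i ih =>
      rw [Set.biUnion_lt_succ, ← Set.union_assoc]
      refine lt_of_le_of_lt (Cardinal.mk_union_le _ _) (Cardinal.add_lt_of_lt hκ.le ih ?_)
      exact lt_of_le_of_lt Cardinal.mk_range_le hγ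
  obtain ⟨C, hC⟩ := exists_nat_seq
    (fun f i t => RealizesType Q t (Ms ∪ ⋃ (j : ℕ) (_ : j < i), Set.range (f j)))
    (by
      intro f g i t hfg hG
      have he : (Ms ∪ ⋃ (j : ℕ) (_ : j < i), Set.range (f j))
          = (Ms ∪ ⋃ (j : ℕ) (_ : j < i), Set.range (g j)) := by
        congr 1
        exact Set.iUnion_congr fun j => Set.iUnion_congr fun hj => by rw [hfg j hj]
      rwa [he] at hG)
    (fun f i => key _ (hcard f i))
  exact ⟨C, hQ, hC⟩

lemma morley_subtuple {Ms : Set 𝕄} {γ : Type v} (q : GlobalType L 𝕄 γ) (hqf : q.FinSatInM Ms)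
    {X Y : ℕ → γ → 𝕄} (hX : MorleyIn q Ms X) (hY : MorleyIn q Ms Y) :
    ∀ (r : ℕ) (f : Fin r → ℕ), StrictMono f →
      EqTpOver L Ms (fun p : Fin r × γ => X (f p.1) p.2)
        (fun p : Fin r × γ => Y (f p.1) p.2) := by
  intro r
  induction r with
  | zero =>
    intro f _ n φ c hc
    have he : (fun p : Fin 0 × γ => X (f p.1) p.2) = (fun p : Fin 0 × γ => Y (f p.1) p.2) :=
      funext fun p => p.1.elim0
    rw [he]
  | succ r ih =>
    intro f hf n φ c hc
    set ρ : (Fin (r + 1) × γ) ⊕ Fin n → γ ⊕ ((Fin r × γ) ⊕ Fin n) := fun x =>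
      Sum.rec (fun p => if h : (p.1 : ℕ) < r then Sum.inr (Sum.inl (⟨⟨(p.1 : ℕ), h⟩, p.2⟩))
          else Sum.inl p.2)
        (fun i => Sum.inr (Sum.inr i)) x with hρ
    obtain ⟨k, g, hg, ψ, hψ⟩ := exists_finSupport_right (𝕄 := 𝕄) (Formula.relabel ρ φ)
    have bridge : ∀ Z : ℕ → γ → 𝕄,
        φ.Realize (Sum.elim (fun p : Fin (r + 1) × γ => Z (f p.1) p.2) c) ↔
          ψ.Realize (Sum.elim (Z (f (Fin.last r)))
            ((Sum.elim (fun p : Fin r × γ => Z (f p.1.castSucc) p.2) c) ∘ g)) := by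
      intro Z
      have e : (Sum.elim (Z (f (Fin.last r)))
            (Sum.elim (fun p : Fin r × γ => Z (f p.1.castSucc) p.2) c)) ∘ ρ
          = Sum.elim (fun p : Fin (r + 1) × γ => Z (f p.1) p.2) c := by
        funext z
        rcases z with ⟨j, y⟩ | i
        · by_cases h : (j : ℕ) < r
          · have hj : (⟨(j : ℕ), h⟩ : Fin r).castSucc = j := Fin.ext rfl
            simp only [hρ, Function.comp_apply, dif_pos h, Sum.elim_inr, Sum.elim_inl]
            rw [hj]
          · have hj : j = Fin.last r := by
              apply Fin.ext
              have := j.isLt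
              simp only [Fin.val_last]
              omega
            simp only [hρ, Function.comp_apply, dif_neg h, Sum.elim_inl]
            rw [hj]
        · rfl
      rw [← e, ← Formula.realize_relabel, hψ]
    set dX := (Sum.elim (fun p : Fin r × γ => X (f p.1.castSucc) p.2) c) ∘ g with hdX
    set dY := (Sum.elim (fun p : Fin r × γ => Y (f p.1.castSucc) p.2) c) ∘ g with hdY
    have hmem : ∀ (Z : ℕ → γ → 𝕄) (i : Fin k),
        ((Sum.elim (fun p : Fin r × γ => Z (f p.1.castSucc) p.2) c) ∘ g) i
          ∈ Ms ∪ ⋃ (j : ℕ) (_ : j < f (Fin.last r)), Set.range (Z j) := by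
      intro Z i
      rcases hgi : g i with p | i'
      · simp only [Function.comp_apply, hgi, Sum.elim_inl]
        refine Set.mem_union_right _ ?_
        refine Set.mem_biUnion (show f p.1.castSucc < f (Fin.last r) from
          hf (Fin.castSucc_lt_last p.1)) ⟨p.2, rfl⟩
      · simp only [Function.comp_apply, hgi, Sum.elim_inr]
        exact Set.mem_union_left _ (hc i')
    have hdXY : EqTpOver L Ms dX dY := by
      have h0 := ih (f ∘ Fin.castSucc) (hf.comp Fin.strictMono_castSucc)
      exact eqTpOver_comp (eqTpOver_append_params h0 hc) g
    have memiff : ((⟨k, (ψ, dX)⟩ : FmlP L 𝕄 γ) ∈ q.carrier)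
        ↔ ((⟨k, (ψ, dY)⟩ : FmlP L 𝕄 γ) ∈ q.carrier) :=
      ⟨fun hm => q.mem_invariant hqf hdXY hm,
        fun hm => q.mem_invariant hqf (eqTpOver_symm hdXY) hm⟩
    rw [bridge X, bridge Y,
      q.realize_iff_mem (hX.2 (f (Fin.last r))) ψ (hmem X),
      q.realize_iff_mem (hY.2 (f (Fin.last r))) ψ (hmem Y)]
    exact memiff

lemma morley_flat_eqTpOver {Ms : Set 𝕄} {γ : Type v} (q : GlobalType L 𝕄 γ)
    (hqf : q.FinSatInM Ms) {X Y : ℕ → γ → 𝕄} (hX : MorleyIn q Ms X) (hY : MorleyIn q Ms Y) :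
    EqTpOver L Ms (flatSeq X) (flatSeq Y) := by
  classical
  intro n φ c hc
  obtain ⟨k, g, hg, ψ, hψ⟩ := exists_finSupport_left (𝕄 := 𝕄) φ
  set s : Finset ℕ := Finset.image (fun i => (g i).1) Finset.univ with hs
  set oi := s.orderIsoOfFin rfl with hoi
  set f : Fin s.card → ℕ := fun j => (oi j : ℕ) with hfdef
  have hfmono : StrictMono f := fun i j hij => Subtype.coe_lt_coe.mpr (oi.strictMono hij)
  set h : Fin k → Fin s.card × γ := fun i =>
    (oi.symm ⟨(g i).1, Finset.mem_image_of_mem _ (Finset.mem_univ i)⟩, (g i).2) with hh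
  have hcomp : ∀ Z : ℕ → γ → 𝕄,
      flatSeq Z ∘ g = (fun p : Fin s.card × γ => Z (f p.1) p.2) ∘ h := by
    intro Z
    funext i
    show Z (g i).1 (g i).2 = Z (f (h i).1) (g i).2
    congr 1
    show (g i).1 = ((oi (oi.symm ⟨(g i).1, _⟩) : ↥s) : ℕ)
    rw [OrderIso.apply_symm_apply]
  have hsub := eqTpOver_comp
    (morley_subtuple q hqf hX hY s.card f hfmono) h n ψ c hc
  rw [hψ, hψ, hcomp X, hcomp Y]
  exact hsub

lemma eqTpOver_empty_extend {Ms : Set 𝕄} {V : Type*} {u v : V → 𝕄} (h : EqTpOver L Ms u v) :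
    EqTpOver L (∅ : Set 𝕄) (Sum.elim (fun x : ↥Ms => (x : 𝕄)) u)
      (Sum.elim (fun x : ↥Ms => (x : 𝕄)) v) := by
  intro n φ c hc
  cases n with
  | succ n => exact absurd (hc 0) (Set.notMem_empty _)
  | zero =>
    set ρ : (↥Ms ⊕ V) ⊕ Fin 0 → ↥Ms ⊕ (V ⊕ Fin 0) :=
      Sum.elim (Sum.map id Sum.inl) (fun z => Sum.inr (Sum.inr z)) with hρ
    obtain ⟨k, g, hg, ψ, hψ⟩ := exists_finSupport_left (𝕄 := 𝕄) (Formula.relabel ρ φ)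
    set τ : Fin k ⊕ (V ⊕ Fin 0) → V ⊕ Fin k :=
      Sum.elim Sum.inr (Sum.elim Sum.inl (fun z => z.elim0)) with hτ
    have key : ∀ x : V → 𝕄,
        φ.Realize (Sum.elim (Sum.elim (fun y : ↥Ms => (y : 𝕄)) x) c) ↔
          (Formula.relabel τ ψ).Realize (Sum.elim x (fun i => ((g i : ↥Ms) : 𝕄))) := by
      intro x
      have h1 : (Sum.elim (fun y : ↥Ms => (y : 𝕄)) (Sum.elim x c)) ∘ ρ
          = Sum.elim (Sum.elim (fun y : ↥Ms => (y : 𝕄)) x) c := by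
        funext z
        rcases z with (y | a) | i
        · rfl
        · rfl
        · exact i.elim0
      have h2 : Sum.elim x (fun i => ((g i : ↥Ms) : 𝕄)) ∘ τ
          = Sum.elim ((fun y : ↥Ms => (y : 𝕄)) ∘ g) (Sum.elim x c) := by
        funext z
        rcases z with i | (a | z)
        · rfl
        · rfl
        · exact z.elim0
      rw [← h1, ← Formula.realize_relabel, hψ, Formula.realize_relabel, h2]
    have hg2 := h k (Formula.relabel τ ψ) (fun i => ((g i : ↥Ms) : 𝕄)) (fun i => (g i).2)
    rw [key u, key v]
    exact hg2

lemma IsElemSubmodel.exists_mem {Ms : Set 𝕄} (hMs : IsElemSubmodel L Ms) (h : Nonempty 𝕄) :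
    ∃ x, x ∈ Ms := by
  obtain ⟨S, hS⟩ := hMs
  set φ : L.Sentence := BoundedFormula.ex
    ((Term.var (Sum.inr 0) : L.Term (Empty ⊕ Fin 1)).bdEqual (Term.var (Sum.inr 0))) with hφ
  have hM : 𝕄 ⊨ φ := by
    obtain ⟨x⟩ := h
    simp only [hφ, Sentence.Realize, Formula.Realize, BoundedFormula.realize_ex,
      BoundedFormula.realize_bdEqual]
    exact ⟨x, trivial⟩
  have hSφ : S ⊨ φ := (ElementarySubstructure.realize_sentence S φ).mpr hM
  simp only [hφ, Sentence.Realize, Formula.Realize, BoundedFormula.realize_ex] at hSφ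
  obtain ⟨x, _⟩ := hSφ
  exact ⟨(x : 𝕄), by rw [← hS]; exact x.2⟩

lemma exists_qhat {Ms : Set 𝕄} (hMs : IsElemSubmodel L Ms) {α β : Type u}
    (q : GlobalType L 𝕄 α) (hq : q.FinSatInM Ms) (b : β → 𝕄) (a : α → 𝕄)
    (ha : ∀ (n : ℕ) (φ : L.Formula (α ⊕ Fin n)) (c : Fin n → 𝕄), (∀ i, c i ∈ Ms) →
      ((⟨n, (φ, c)⟩ : FmlP L 𝕄 α) ∈ q.carrier ↔ φ.Realize (Sum.elim a c)))
    (hX : ∃ m : β ⊕ α → 𝕄, ∀ i, m i ∈ Ms) :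
    ∃ Q : GlobalType L 𝕄 (β ⊕ α), Q.FinSatInM Ms ∧
      (∀ (n : ℕ) (φ : L.Formula ((β ⊕ α) ⊕ Fin n)) (c : Fin n → 𝕄), (∀ i, c i ∈ Ms) →
        φ.Realize (Sum.elim (Sum.elim b a) c) →
          (⟨n, (φ, c)⟩ : FmlP L 𝕄 (β ⊕ α)) ∈ Q.carrier) ∧
      (∀ p : FmlP L 𝕄 α, p ∈ q.carrier →
        (⟨p.1, (Formula.relabel (Sum.map Sum.inr id) p.2.1, p.2.2)⟩ : FmlP L 𝕄 (β ⊕ α))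
          ∈ Q.carrier) := by
  classical
  set X := {m : β ⊕ α → 𝕄 // ∀ i, m i ∈ Ms} with hXdef
  set Fam1 : Set (Set X) :=
    {E | ∃ (n : ℕ) (φ : L.Formula ((β ⊕ α) ⊕ Fin n)) (c : Fin n → 𝕄),
      (∀ i, c i ∈ Ms) ∧ φ.Realize (Sum.elim (Sum.elim b a) c) ∧
        E = {m : X | φ.Realize (Sum.elim m.1 c)}} with hFam1
  set Fam2 : Set (Set X) :=
    {E | ∃ p : FmlP L 𝕄 α, p ∈ q.carrier ∧
        E = {m : X | p.2.1.Realize (Sum.elim (m.1 ∘ Sum.inr) p.2.2)}} with hFam2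
  have hFIP : ∀ T : Finset (Set X), (↑T : Set (Set X)) ⊆ Fam1 ∪ Fam2 →
      (⋂₀ (↑T : Set (Set X))).Nonempty := by
    intro T hT
    set T1 : Finset (Set X) := T.filter (fun E => E ∈ Fam1) with hT1
    set T2 : Finset (Set X) := T.filter (fun E => E ∉ Fam1) with hT2
    have hT2f : ∀ E ∈ T2, E ∈ Fam2 := by
      intro E hE
      have h1 := (Finset.mem_filter.mp hE).1
      have h2 := (Finset.mem_filter.mp hE).2
      rcases hT (Finset.mem_coe.mpr h1) with h | h
      · exact absurd h h2
      · exact h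
    have hchoice1 : ∀ E : {E // E ∈ T1}, ∃ p : FmlP L 𝕄 (β ⊕ α), (∀ i, p.2.2 i ∈ Ms) ∧
        p.2.1.Realize (Sum.elim (Sum.elim b a) p.2.2) ∧
        E.1 = {m : X | p.2.1.Realize (Sum.elim m.1 p.2.2)} := by
      rintro ⟨E, hE⟩
      obtain ⟨n, φ, c, h1, h2, h3⟩ := (Finset.mem_filter.mp hE).2
      exact ⟨⟨n, (φ, c)⟩, h1, h2, h3⟩
    choose F1 hF1a hF1b hF1c using hchoice1
    set l : List (FmlP L 𝕄 (β ⊕ α)) := T1.attach.toList.map F1 with hldef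
    have hl : ∀ p ∈ l, ∀ i, p.2.2 i ∈ Ms := by
      intro p hp
      rw [hldef, List.mem_map] at hp
      obtain ⟨E, _, rfl⟩ := hp
      exact hF1a E
    obtain ⟨K, θ, d, hd, hθ⟩ := exists_conj Ms l hl
    have hθba : θ.Realize (Sum.elim (Sum.elim b a) d) := by
      rw [hθ]
      intro p hp
      rw [hldef, List.mem_map] at hp
      obtain ⟨E, _, rfl⟩ := hp
      exact hF1b E
    set ρ : ((β ⊕ α) ⊕ Fin K) → β ⊕ (α ⊕ Fin K) :=
      Sum.elim (Sum.elim Sum.inl (fun y => Sum.inr (Sum.inl y)))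
        (fun i => Sum.inr (Sum.inr i)) with hρ
    set θ' := Formula.relabel ρ θ with hθ'
    have hθ'iff : ∀ (vβ : β → 𝕄) (vα : α → 𝕄) (vd : Fin K → 𝕄),
        θ'.Realize (Sum.elim vβ (Sum.elim vα vd)) ↔
          θ.Realize (Sum.elim (Sum.elim vβ vα) vd) := by
      intro vβ vα vd
      rw [hθ', Formula.realize_relabel]
      have e : Sum.elim vβ (Sum.elim vα vd) ∘ ρ = Sum.elim (Sum.elim vβ vα) vd := by
        funext z; rcases z with (x | y) | i <;> rfl
      rw [e]
    obtain ⟨k, g, hg, Ψ, hΨ⟩ := exists_finSupport_left (𝕄 := 𝕄) θ'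
    set χ : L.Formula (α ⊕ Fin K) := Formula.iExs (Fin k) (Formula.relabel Sum.swap Ψ) with hχdef
    have hswap : ∀ (v : (α ⊕ Fin K) → 𝕄) (e : Fin k → 𝕄),
        Sum.elim v e ∘ Sum.swap = Sum.elim e v := by
      intro v e; funext x; rcases x <;> rfl
    have haχ : χ.Realize (Sum.elim a d) := by
      rw [hχdef, Formula.realize_iExs]
      refine ⟨b ∘ g, ?_⟩
      rw [Formula.realize_relabel, hswap, ← hΨ, hθ'iff]
      exact hθba
    have hχq : (⟨K, (χ, d)⟩ : FmlP L 𝕄 α) ∈ q.carrier := (ha K χ d hd).mpr haχ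
    have hchoice2 : ∀ E : {E // E ∈ T2}, ∃ p : FmlP L 𝕄 α, p ∈ q.carrier ∧
        E.1 = {m : X | p.2.1.Realize (Sum.elim (m.1 ∘ Sum.inr) p.2.2)} :=
      fun E => hT2f E.1 E.2
    choose F2 hF2a hF2b using hchoice2
    set E2 : Finset (FmlP L 𝕄 α) := T2.attach.image F2 with hE2
    obtain ⟨mα, hmαMs, hmαr⟩ := hq (insert ⟨K, (χ, d)⟩ E2) (by
      intro p hp
      rcases Finset.mem_insert.mp (Finset.mem_coe.mp hp) with rfl | hpE
      · exact hχq
      · obtain ⟨E, _, rfl⟩ := Finset.mem_image.mp hpE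
        exact hF2a E)
    have hχm : χ.Realize (Sum.elim mα d) :=
      hmαr _ (Finset.mem_insert_self _ _)
    obtain ⟨S, hS⟩ := hMs
    set mS : α → S := fun i => ⟨mα i, by rw [← hS] at hmαMs; exact hmαMs i⟩ with hmS
    set dS : Fin K → S := fun i => ⟨d i, by rw [← hS] at hd; exact hd i⟩ with hdS
    have hχS : χ.Realize (Sum.elim mS dS) := by
      have h0 := S.subtype.map_formula χ (Sum.elim mS dS)
      rw [← h0]
      have e : (⇑S.subtype ∘ Sum.elim mS dS) = Sum.elim mα d := by
        funext z; rcases z <;> rfl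
      rwa [e]
    have hχS' : ∃ eS : Fin k → S, Ψ.Realize (Sum.elim eS (Sum.elim mS dS)) := by
      rw [hχdef, Formula.realize_iExs] at hχS
      simp only [Formula.realize_relabel] at hχS
      obtain ⟨eS, he⟩ := hχS
      refine ⟨eS, ?_⟩
      have e : (Sum.elim (Sum.elim mS dS) eS ∘ Sum.swap)
          = Sum.elim eS (Sum.elim mS dS) := by
        funext x; rcases x <;> rfl
      rwa [e] at he
    obtain ⟨eS, heS⟩ := hχS'
    have heM : Ψ.Realize (Sum.elim (fun i => ((eS i : 𝕄))) (Sum.elim mα d)) := by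
      have h0 := S.subtype.map_formula Ψ (Sum.elim eS (Sum.elim mS dS))
      have e : (⇑S.subtype ∘ Sum.elim eS (Sum.elim mS dS))
          = Sum.elim (fun i => ((eS i : 𝕄))) (Sum.elim mα d) := by
        funext z; rcases z with i | (x | j) <;> rfl
      rw [e] at h0
      exact h0.mpr heS
    have heMs : ∀ i, ((eS i : 𝕄)) ∈ Ms := fun i => by rw [← hS]; exact (eS i).2
    set vβ : β → 𝕄 := fun y =>
      if hy : ∃ i, g i = y then (eS (Classical.choose hy) : 𝕄)
      else Classical.choose hX (Sum.inl y) with hvβ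
    have hvβg : vβ ∘ g = fun i => ((eS i : 𝕄)) := by
      funext i
      have hy : ∃ i', g i' = g i := ⟨i, rfl⟩
      simp only [hvβ, Function.comp_apply, dif_pos hy]
      exact congrArg (fun j => ((eS j : 𝕄))) (hg (Classical.choose_spec hy))
    have hvβMs : ∀ y, vβ y ∈ Ms := by
      intro y
      rw [hvβ]
      by_cases hy : ∃ i, g i = y
      · simpa only [dif_pos hy] using heMs _
      · simpa only [dif_neg hy] using Classical.choose_spec hX (Sum.inl y)
    have hmθ : θ.Realize (Sum.elim (Sum.elim vβ mα) d) := by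
      rw [← hθ'iff, hΨ, hvβg]
      exact heM
    have hmfinMs : ∀ i : β ⊕ α, Sum.elim vβ mα i ∈ Ms := by
      intro i
      rcases i with y | x
      · exact hvβMs y
      · exact hmαMs x
    refine ⟨⟨Sum.elim vβ mα, hmfinMs⟩, Set.mem_sInter.mpr fun E hE => ?_⟩
    have hET : E ∈ T := Finset.mem_coe.mp hE
    by_cases hEf : E ∈ Fam1
    · have hET1 : E ∈ T1 := Finset.mem_filter.mpr ⟨hET, hEf⟩
      rw [show E = {m : X | (F1 ⟨E, hET1⟩).2.1.Realize (Sum.elim m.1 (F1 ⟨E, hET1⟩).2.2)}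
        from hF1c ⟨E, hET1⟩]
      exact (hθ (Sum.elim vβ mα)).mp hmθ (F1 ⟨E, hET1⟩)
        (by rw [hldef, List.mem_map]
            exact ⟨⟨E, hET1⟩, Finset.mem_toList.mpr (Finset.mem_attach _ _), rfl⟩)
    · have hET2 : E ∈ T2 := Finset.mem_filter.mpr ⟨hET, hEf⟩
      rw [show E = {m : X | (F2 ⟨E, hET2⟩).2.1.Realize
          (Sum.elim (m.1 ∘ Sum.inr) (F2 ⟨E, hET2⟩).2.2)} from hF2b ⟨E, hET2⟩]
      show (F2 ⟨E, hET2⟩).2.1.Realize (Sum.elim ((Sum.elim vβ mα) ∘ Sum.inr) (F2 ⟨E, hET2⟩).2.2)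
      have e : (Sum.elim vβ mα) ∘ Sum.inr = mα := by funext x; rfl
      rw [e]
      exact hmαr _ (Finset.mem_insert_of_mem
        (Finset.mem_image.mpr ⟨⟨E, hET2⟩, Finset.mem_attach _ _, rfl⟩))
  obtain ⟨U, hU⟩ := Ultrafilter.exists_ultrafilter_of_finite_inter_nonempty _ hFIP
  refine ⟨{ carrier := {p | {m : X | p.2.1.Realize (Sum.elim m.1 p.2.2)} ∈ U}
            consistent := ?_
            complete := ?_ }, ?_, ?_, ?_⟩
  · intro t ht
    have hmem : (⋂ p ∈ t, {m : X | p.2.1.Realize (Sum.elim m.1 p.2.2)}) ∈ U :=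
      (Filter.biInter_mem t.finite_toSet).mpr (fun p hp => ht hp)
    obtain ⟨m, hm⟩ := Ultrafilter.nonempty_of_mem hmem
    exact ⟨m.1, fun p hp => Set.mem_iInter₂.mp hm p hp⟩
  · intro n φ c
    by_cases hmem : {m : X | φ.Realize (Sum.elim m.1 c)} ∈ U
    · exact Or.inl hmem
    · refine Or.inr ?_
      show {m : X | φ.not.Realize (Sum.elim m.1 c)} ∈ U
      have e : {m : X | φ.not.Realize (Sum.elim m.1 c)}
          = {m : X | φ.Realize (Sum.elim m.1 c)}ᶜ := by
        ext m
        simp [Formula.realize_not]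
      rw [e, Ultrafilter.compl_mem_iff_notMem]
      exact hmem
  · intro t ht
    have hmem : (⋂ p ∈ t, {m : X | p.2.1.Realize (Sum.elim m.1 p.2.2)}) ∈ U :=
      (Filter.biInter_mem t.finite_toSet).mpr (fun p hp => ht hp)
    obtain ⟨m, hm⟩ := Ultrafilter.nonempty_of_mem hmem
    exact ⟨m.1, m.2, fun p hp => Set.mem_iInter₂.mp hm p hp⟩
  · intro n φ c hc hr
    exact hU (Or.inl ⟨n, φ, c, hc, hr, rfl⟩)
  · intro p hp
    show {m : X | (Formula.relabel (Sum.map Sum.inr id) p.2.1).Realize (Sum.elim m.1 p.2.2)} ∈ U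
    have e : {m : X | (Formula.relabel (Sum.map Sum.inr id) p.2.1).Realize (Sum.elim m.1 p.2.2)}
        = {m : X | p.2.1.Realize (Sum.elim (m.1 ∘ Sum.inr) p.2.2)} := by
      ext m
      rw [Set.mem_setOf_eq, Set.mem_setOf_eq, Formula.realize_relabel]
      have e2 : Sum.elim m.1 p.2.2 ∘ Sum.map Sum.inr id = Sum.elim (m.1 ∘ Sum.inr) p.2.2 := by
        funext z; rcases z <;> rfl
      rw [e2]
    rw [e]
    exact hU (Or.inr ⟨p, hp, rfl⟩)

lemma exists_map_globalType (σ : 𝕄 ≃[L] 𝕄) {γ : Type v} (Q : GlobalType L 𝕄 γ) :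
    ∃ Q' : GlobalType L 𝕄 γ, ∀ p : FmlP L 𝕄 γ,
      (p ∈ Q'.carrier ↔ (⟨p.1, (p.2.1, ⇑σ.symm ∘ p.2.2)⟩ : FmlP L 𝕄 γ) ∈ Q.carrier) := by
  classical
  have hreal : ∀ (n : ℕ) (φ : L.Formula (γ ⊕ Fin n)) (x : γ → 𝕄) (c : Fin n → 𝕄),
      φ.Realize (Sum.elim (⇑σ ∘ x) c) ↔ φ.Realize (Sum.elim x (⇑σ.symm ∘ c)) := by
    intro n φ x c
    have h0 := σ.toElementaryEmbedding.map_formula φ (Sum.elim x (⇑σ.symm ∘ c))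
    rw [Equiv.coe_toElementaryEmbedding] at h0
    have e : (⇑σ ∘ Sum.elim x (⇑σ.symm ∘ c)) = Sum.elim (⇑σ ∘ x) c := by
      funext z
      rcases z with y | i
      · rfl
      · exact σ.apply_symm_apply (c i)
    rwa [e] at h0
  refine ⟨{ carrier := {p | (⟨p.1, (p.2.1, ⇑σ.symm ∘ p.2.2)⟩ : FmlP L 𝕄 γ) ∈ Q.carrier}
            consistent := ?_
            complete := ?_ }, fun p => Iff.rfl⟩
  · intro t ht
    obtain ⟨a, ha⟩ := Q.consistent
      (t.image (fun p : FmlP L 𝕄 γ =>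
        (⟨p.1, (p.2.1, ⇑σ.symm ∘ p.2.2)⟩ : FmlP L 𝕄 γ))) (by
        intro p hp
        obtain ⟨r, hr, rfl⟩ := Finset.mem_image.mp (Finset.mem_coe.mp hp)
        exact ht hr)
    exact ⟨⇑σ ∘ a, fun p hp =>
      (hreal _ _ _ _).mpr (ha _ (Finset.mem_image_of_mem _ hp))⟩
  · intro n φ c
    exact Q.complete n φ (⇑σ.symm ∘ c)

end NSOP2Paper

namespace NSOP2Paper

/-- **Claim 3.4.** Let `q` be a global type finitely satisfiable in `M` and
`a¹,…,aⁿ` the first `n` terms of a coheir Morley sequence in `q` over `M`.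
Let `a ≡_M a¹` and `b` any tuple.  Then there are `b¹,…,bⁿ` such that
`b¹a¹,…,bⁿaⁿ` are the first `n` terms of a coheir Morley sequence over `M`
with `bⁱaⁱ ≡_M ba`; similarly for infinite coheir Morley sequences. -/
theorem coheir_pair_extension (L : FirstOrder.Language.{u, u}) (𝕄 : Type u) [L.Structure 𝕄]
    (κ : Cardinal.{u}) (hmonster : IsMonster L 𝕄 κ)
    (Ms : Set 𝕄) (hMs : IsElemSubmodel L Ms) (hMssmall : Cardinal.mk Ms < κ)
    (α β : Type u) (hα : Cardinal.mk α < κ) (hβ : Cardinal.mk β < κ)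
    (q : GlobalType L 𝕄 α) (hq : q.FinSatInM Ms) :
    (∀ (n : ℕ) (A : Fin n → α → 𝕄),
      (∃ A' : ℕ → α → 𝕄, MorleyIn q Ms A' ∧ ∀ i : Fin n, A' i = A i) →
      ∀ (a : α → 𝕄) (b : β → 𝕄), (∀ i, EqTpOver L Ms a (A i)) →
        ∃ B : Fin n → β → 𝕄,
          (∃ C : ℕ → (β ⊕ α) → 𝕄, CoheirMorley L Ms C ∧
            ∀ i : Fin n, C i = Sum.elim (B i) (A i)) ∧
          ∀ i : Fin n, EqTpOver L Ms (Sum.elim (B i) (A i)) (Sum.elim b a)) ∧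
    (∀ A : ℕ → α → 𝕄, MorleyIn q Ms A →
      ∀ (a : α → 𝕄) (b : β → 𝕄), (∀ i, EqTpOver L Ms a (A i)) →
        ∃ B : ℕ → β → 𝕄, CoheirMorley L Ms (fun i => Sum.elim (B i) (A i)) ∧
          ∀ i : ℕ, EqTpOver L Ms (Sum.elim (B i) (A i)) (Sum.elim b a)) := by
  classical
  obtain ⟨hκℵ, hsat, hhom⟩ := hmonster
  have main2 : ∀ A : ℕ → α → 𝕄, MorleyIn q Ms A →
      ∀ (a : α → 𝕄) (b : β → 𝕄), (∀ i, EqTpOver L Ms a (A i)) →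
        ∃ B : ℕ → β → 𝕄, CoheirMorley L Ms (fun i => Sum.elim (B i) (A i)) ∧
          ∀ i : ℕ, EqTpOver L Ms (Sum.elim (B i) (A i)) (Sum.elim b a) := by
    intro A hA a b hab
    have haiff : ∀ (n : ℕ) (φ : L.Formula (α ⊕ Fin n)) (c : Fin n → 𝕄), (∀ i, c i ∈ Ms) →
        ((⟨n, (φ, c)⟩ : FmlP L 𝕄 α) ∈ q.carrier ↔ φ.Realize (Sum.elim a c)) := by
      intro n φ c hc
      rw [← q.realize_iff_mem (hA.realizesType_Ms 0) φ hc]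
      exact (hab 0 n φ c hc).symm
    have hXex : ∃ m : β ⊕ α → 𝕄, ∀ i, m i ∈ Ms := by
      by_cases hne : Nonempty (β ⊕ α)
      · have h𝕄 : Nonempty 𝕄 := ⟨Sum.elim b a (Classical.choice hne)⟩
        obtain ⟨x, hx⟩ := hMs.exists_mem h𝕄
        exact ⟨fun _ => x, fun _ => hx⟩
      · exact ⟨fun i => (hne ⟨i⟩).elim, fun i => (hne ⟨i⟩).elim⟩
    obtain ⟨Q, hQfs, hQext, hQq⟩ := exists_qhat hMs q hq b a haiff hXex
    have hβα : Cardinal.mk (β ⊕ α) < κ := by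
      have h1 : Cardinal.mk (β ⊕ α) = Cardinal.mk β + Cardinal.mk α := by
        simp [Cardinal.mk_sum]
      rw [h1]
      exact Cardinal.add_lt_of_lt hκℵ.le hβ hα
    obtain ⟨C, hC⟩ := exists_morleyIn hκℵ hsat hMssmall hβα Q hQfs
    set Cα : ℕ → α → 𝕄 := fun i => C i ∘ Sum.inr with hCαdef
    have hCαM : MorleyIn q Ms Cα := by
      refine ⟨hq, fun i n ψ c hc hmem => ?_⟩
      have hc' : ∀ j, c j ∈ Ms ∪ ⋃ (l : ℕ) (_ : l < i), Set.range (C l) := by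
        intro j
        rcases hc j with h | h
        · exact Set.mem_union_left _ h
        · obtain ⟨l, hl, x, hx⟩ := Set.mem_iUnion₂.mp h
          exact Set.mem_union_right _ (Set.mem_iUnion₂.mpr ⟨l, hl, ⟨Sum.inr x, hx⟩⟩)
      have hreal := hC.2 i n (Formula.relabel (Sum.map Sum.inr id) ψ) c hc'
        (hQq ⟨n, (ψ, c)⟩ hmem)
      rw [Formula.realize_relabel] at hreal
      have e : Sum.elim (C i) c ∘ Sum.map Sum.inr id = Sum.elim (C i ∘ Sum.inr) c := by
        funext z; rcases z <;> rfl
      rwa [e] at hreal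
    have hCba : ∀ i, EqTpOver L Ms (C i) (Sum.elim b a) := by
      intro i n φ c hc
      rw [Q.realize_iff_mem (hC.realizesType_Ms i) φ hc]
      constructor
      · intro hmem
        by_contra hnr
        have hnot : φ.not.Realize (Sum.elim (Sum.elim b a) c) := by
          rwa [Formula.realize_not]
        exact Q.not_mem_both hmem (hQext n φ.not c hc hnot)
      · exact hQext n φ c hc
    have hflat := morley_flat_eqTpOver q hq hCαM hA
    have hU := eqTpOver_empty_extend hflat
    have hcard2 : Cardinal.mk (↥Ms ⊕ (ℕ × α)) < κ := by
      have h1 : Cardinal.mk (↥Ms ⊕ (ℕ × α))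
          = Cardinal.mk ↥Ms + Cardinal.aleph0 * Cardinal.mk α := by
        simp [Cardinal.mk_sum, Cardinal.mk_prod, Cardinal.lift_id]
      rw [h1]
      exact Cardinal.add_lt_of_lt hκℵ.le hMssmall
        (Cardinal.mul_lt_of_lt hκℵ.le hκℵ hα)
    obtain ⟨σ, hσ⟩ := hhom (↥Ms ⊕ (ℕ × α)) hcard2 _ _ hU
    have hfix : ∀ x ∈ Ms, σ x = x := fun x hx => hσ (Sum.inl ⟨x, hx⟩)
    have hfixsymm : ∀ x ∈ Ms, σ.symm x = x := by
      intro x hx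
      have h1 : σ.symm (σ x) = x := σ.symm_apply_apply x
      rwa [hfix x hx] at h1
    have hmap : ∀ i x, σ (Cα i x) = A i x := fun i x => hσ (Sum.inr (i, x))
    set B : ℕ → β → 𝕄 := fun i y => σ (C i (Sum.inl y)) with hB
    have hCeq : ∀ i, ⇑σ ∘ C i = Sum.elim (B i) (A i) := by
      intro i; funext z
      rcases z with y | x
      · rfl
      · exact hmap i x
    have hmapf : ∀ (n : ℕ) (φ : L.Formula ((β ⊕ α) ⊕ Fin n)) (v : (β ⊕ α) ⊕ Fin n → 𝕄),
        φ.Realize (⇑σ ∘ v) ↔ φ.Realize v := by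
      intro n φ v
      have h0 := σ.toElementaryEmbedding.map_formula φ v
      rwa [Equiv.coe_toElementaryEmbedding] at h0
    obtain ⟨Q', hQ'⟩ := exists_map_globalType σ Q
    have hmorley' : MorleyIn Q' Ms (fun i => Sum.elim (B i) (A i)) := by
      constructor
      · intro t ht
        obtain ⟨m, hmMs, hmr⟩ := hQfs (t.image (fun p : FmlP L 𝕄 (β ⊕ α) =>
          (⟨p.1, (p.2.1, ⇑σ.symm ∘ p.2.2)⟩ : FmlP L 𝕄 (β ⊕ α)))) (by
            intro p hp
            obtain ⟨r, hr, rfl⟩ := Finset.mem_image.mp (Finset.mem_coe.mp hp)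
            exact (hQ' r).mp (ht hr))
        refine ⟨m, hmMs, fun p hp => ?_⟩
        have h0 := hmr _ (Finset.mem_image_of_mem _ hp)
        have h1 := hmapf p.1 p.2.1 (Sum.elim m (⇑σ.symm ∘ p.2.2))
        have e : ⇑σ ∘ Sum.elim m (⇑σ.symm ∘ p.2.2) = Sum.elim m p.2.2 := by
          funext z
          rcases z with y | j
          · exact hfix _ (hmMs y)
          · exact σ.apply_symm_apply _
        rw [e] at h1
        exact h1.mpr h0
      · intro i n φ c hc hmem
        have hc' : ∀ j, (⇑σ.symm ∘ c) j ∈ Ms ∪ ⋃ (l : ℕ) (_ : l < i), Set.range (C l) := by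
          intro j
          rcases hc j with h | h
          · refine Set.mem_union_left _ ?_
            show σ.symm (c j) ∈ Ms
            rw [hfixsymm _ h]; exact h
          · obtain ⟨l, hl, x, hx⟩ := Set.mem_iUnion₂.mp h
            refine Set.mem_union_right _ (Set.mem_iUnion₂.mpr ⟨l, hl, ⟨x, ?_⟩⟩)
            have h2 : σ (C l x) = c j := by
              have h3 := congrFun (hCeq l) x
              simp only [Function.comp_apply] at h3
              rw [h3]; exact hx
            show C l x = σ.symm (c j)
            rw [← h2, σ.symm_apply_apply]
        have h0 := hC.2 i n φ (⇑σ.symm ∘ c) hc' ((hQ' ⟨n, (φ, c)⟩).mp hmem)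
        have h1 := hmapf n φ (Sum.elim (C i) (⇑σ.symm ∘ c))
        have e : ⇑σ ∘ Sum.elim (C i) (⇑σ.symm ∘ c) = Sum.elim (Sum.elim (B i) (A i)) c := by
          funext z
          rcases z with z | j
          · exact congrFun (hCeq i) z
          · exact σ.apply_symm_apply _
        rw [e] at h1
        exact h1.mpr h0
    refine ⟨B, ⟨Q', hmorley'⟩, fun i => ?_⟩
    intro n φ c hc
    have h1 := hmapf n φ (Sum.elim (C i) c)
    have e : ⇑σ ∘ Sum.elim (C i) c = Sum.elim (Sum.elim (B i) (A i)) c := by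
      funext z
      rcases z with z | j
      · exact congrFun (hCeq i) z
      · exact hfix _ (hc j)
    rw [e] at h1
    rw [h1]
    exact hCba i n φ c hc
  refine ⟨?_, main2⟩
  intro n A hA' a b hab
  obtain ⟨A', hA'M, hA'eq⟩ := hA'
  by_cases hn : n = 0
  · subst hn
    obtain ⟨Binf, hmor, _⟩ := main2 A' hA'M (A' 0) b (fun i => hA'M.eqTpOver_of_mem 0 i)
    exact ⟨fun i => i.elim0,
      ⟨⟨fun i => Sum.elim (Binf i) (A' i), hmor, fun i => i.elim0⟩, fun i => i.elim0⟩⟩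
  · have hpos : 0 < n := Nat.pos_of_ne_zero hn
    have h0 : EqTpOver L Ms a (A' 0) := by
      have h1 := hab ⟨0, hpos⟩
      have h2 : A' ((⟨0, hpos⟩ : Fin n) : ℕ) = A ⟨0, hpos⟩ := hA'eq ⟨0, hpos⟩
      rw [← h2] at h1
      exact h1
    have habN : ∀ i : ℕ, EqTpOver L Ms a (A' i) :=
      fun i => eqTpOver_trans h0 (hA'M.eqTpOver_of_mem 0 i)
    obtain ⟨Binf, hmor, heq⟩ := main2 A' hA'M a b habN
    refine ⟨fun i => Binf ↑i,
      ⟨⟨fun i => Sum.elim (Binf i) (A' i), hmor, fun i => ?_⟩, fun i => ?_⟩⟩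
    · show Sum.elim (Binf ↑i) (A' ↑i) = Sum.elim (Binf ↑i) (A i)
      rw [hA'eq i]
    · have h3 := heq ↑i
      rw [hA'eq i] at h3
      exact h3


end NSOP2Paper
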